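/- arXiv:math/0001018 — 2 statements merged into one kernel-verified Lean document; each statement's English description precedes it below -/
import Mathlib

section
/- For k ≥ 1 let J_k = ((k+1)^{−3(k+1)}, k^{−3k}] ⊂ (0,1], and let η be the measure on ℝ with density g(x) = Σ_{k=1}^∞ |x|^{−3+1/k} · 1_{{|x| ∈ J_k}}(x) with respect to Lebesgue measure. Then the index of η, defined as β = inf{ α > 0 : ∫_{{|x| ≤ 1}} |x|^α dη(x) < ∞ }, equals 2. -/
open MeasureTheory ENNReal

/-- The density `g(x) = Σ_{k≥1} |x|^{−3+1/k} · 1_{|x| ∈ J_k}(x)`, where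
`J_k = ((k+1)^{−3(k+1)}, k^{−3k}]`.  (The series over `k ≥ 1` is indexed by `k : ℕ`
via `k ↦ k+1`.) -/
noncomputable def levyDensity (x : ℝ) : ℝ :=
  ∑' k : ℕ,
    if |x| ∈ Set.Ioc (((k : ℝ) + 2) ^ (-(3 : ℝ) * ((k : ℝ) + 2)))
        (((k : ℝ) + 1) ^ (-(3 : ℝ) * ((k : ℝ) + 1)))
    then |x| ^ ((-3 : ℝ) + 1 / ((k : ℝ) + 1)) else 0

/-- The measure `η` on `ℝ` with density `g` with respect to Lebesgue measure. -/
noncomputable def levyEta : Measure ℝ :=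
  volume.withDensity fun x => ENNReal.ofReal (levyDensity x)


open Set in

noncomputable def bb (k : ℕ) : ℝ := ((k:ℝ)+1) ^ (-(3:ℝ) * ((k:ℝ)+1))

lemma bb_pos (k : ℕ) : 0 < bb k := Real.rpow_pos_of_pos (by positivity) _

lemma bb_le_one (k : ℕ) : bb k ≤ 1 :=
  Real.rpow_le_one_of_one_le_of_nonpos (by norm_num) (by nlinarith [Nat.cast_nonneg (α := ℝ) k])

lemma bb_succ_le (k : ℕ) : bb (k+1) ≤ bb k := by
  unfold bb
  push_cast
  have h1 : ((k:ℝ)+1+1) ^ (-(3:ℝ) * ((k:ℝ)+1+1)) ≤ ((k:ℝ)+1+1) ^ (-(3:ℝ) * ((k:ℝ)+1)) := by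
    apply Real.rpow_le_rpow_of_exponent_le (by nlinarith [Nat.cast_nonneg (α := ℝ) k])
    nlinarith [Nat.cast_nonneg (α := ℝ) k]
  refine h1.trans ?_
  apply Real.rpow_le_rpow_of_nonpos (by positivity) (by linarith) (by nlinarith [Nat.cast_nonneg (α := ℝ) k])

lemma bb_anti : Antitone bb := antitone_nat_of_succ_le bb_succ_le

noncomputable def Ik (k : ℕ) : Set ℝ := Set.Ioc (bb (k+1)) (bb k)

lemma Ik_eq (k : ℕ) :
    Set.Ioc (((k : ℝ) + 2) ^ (-(3 : ℝ) * ((k : ℝ) + 2)))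
      (((k : ℝ) + 1) ^ (-(3 : ℝ) * ((k : ℝ) + 1))) = Ik k := by
  unfold Ik bb
  have h1 : ((k:ℝ)+1+1) = (k:ℝ)+2 := by ring
  rw [show (((k+1:ℕ)):ℝ) = (k:ℝ)+1 by push_cast; ring, h1]

lemma Ik_unique {x : ℝ} {j k : ℕ} (hj : x ∈ Ik j) (hk : x ∈ Ik k) : j = k := by
  by_contra hne
  rcases Nat.lt_or_ge j k with h | h
  · have h2 : bb k ≤ bb (j+1) := bb_anti h
    exact absurd hj.1 (not_lt.2 (hk.2.trans h2))
  · have hlt : k < j := lt_of_le_of_ne h (Ne.symm hne)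
    have h2 : bb j ≤ bb (k+1) := bb_anti hlt
    exact absurd hk.1 (not_lt.2 (hj.2.trans h2))

noncomputable def ee (k : ℕ) : ℝ := (-3 : ℝ) + 1 / ((k : ℝ) + 1)

noncomputable def Sk (k : ℕ) : Set ℝ := {x : ℝ | |x| ∈ Ik k}

noncomputable def FF (k : ℕ) : ℝ → ℝ≥0∞ :=
  (Sk k).indicator (fun x => ENNReal.ofReal (|x| ^ ee k))

lemma density_eq :
    (fun x => ENNReal.ofReal (levyDensity x)) = fun x => ∑' k, FF k x := by
  funext x
  have hcond : ∀ k : ℕ,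
      (|x| ∈ Set.Ioc (((k : ℝ) + 2) ^ (-(3 : ℝ) * ((k : ℝ) + 2)))
        (((k : ℝ) + 1) ^ (-(3 : ℝ) * ((k : ℝ) + 1)))) ↔ |x| ∈ Ik k := by
    intro k; rw [Ik_eq]
  unfold levyDensity FF
  by_cases h : ∃ k, |x| ∈ Ik k
  · obtain ⟨k₀, hk₀⟩ := h
    have h1 : (∑' k : ℕ,
        if |x| ∈ Set.Ioc (((k : ℝ) + 2) ^ (-(3 : ℝ) * ((k : ℝ) + 2)))
          (((k : ℝ) + 1) ^ (-(3 : ℝ) * ((k : ℝ) + 1)))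
        then |x| ^ ((-3 : ℝ) + 1 / ((k : ℝ) + 1)) else 0) = |x| ^ ee k₀ := by
      rw [tsum_eq_single k₀]
      · rw [if_pos ((hcond k₀).2 hk₀)]; rfl
      · intro j hj
        rw [if_neg]
        intro hmem
        exact hj (Ik_unique ((hcond j).1 hmem) hk₀)
    have h2 : (∑' k : ℕ, (Sk k).indicator (fun x => ENNReal.ofReal (|x| ^ ee k)) x)
        = ENNReal.ofReal (|x| ^ ee k₀) := by
      rw [tsum_eq_single k₀]
      · exact Set.indicator_of_mem (show x ∈ Sk k₀ from hk₀) _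
      · intro j hj
        exact Set.indicator_of_notMem
          (show x ∉ Sk j from fun hmem => hj (Ik_unique hmem hk₀)) _
    rw [h1, h2]
  · push_neg at h
    have h1 : ∀ k : ℕ,
        (if |x| ∈ Set.Ioc (((k : ℝ) + 2) ^ (-(3 : ℝ) * ((k : ℝ) + 2)))
          (((k : ℝ) + 1) ^ (-(3 : ℝ) * ((k : ℝ) + 1)))
        then |x| ^ ((-3 : ℝ) + 1 / ((k : ℝ) + 1)) else 0) = 0 := fun k =>
      if_neg (fun hmem => h k ((hcond k).1 hmem))
    have h2 : ∀ k : ℕ, (Sk k).indicator (fun x => ENNReal.ofReal (|x| ^ ee k)) x = 0 :=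
      fun k => Set.indicator_of_notMem (show x ∉ Sk k from h k) _
    simp only [h1, h2, tsum_zero, ENNReal.ofReal_zero]

lemma Sk_measurable (k : ℕ) : MeasurableSet (Sk k) :=
  measurable_abs measurableSet_Ioc

lemma FF_measurable (k : ℕ) : Measurable (FF k) :=
  ((measurable_abs.pow_const (ee k)).ennreal_ofReal).indicator (Sk_measurable k)

lemma levyEta_eq : levyEta = volume.withDensity (fun x => ∑' k, FF k x) := by
  unfold levyEta; rw [density_eq]

noncomputable def PP (k : ℕ) (α : ℝ) : ℝ≥0∞ :=
  ∫⁻ x in Set.Ioc (bb (k+1)) (bb k), ENNReal.ofReal (x ^ (α + ee k)) ∂volume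

lemma Sk_subset (k : ℕ) : Sk k ⊆ {x : ℝ | |x| ≤ 1} :=
  fun x hx => le_trans hx.2 (bb_le_one k)

lemma Sk_eq (k : ℕ) :
    Sk k = Set.Ico (-(bb k)) (-(bb (k+1))) ∪ Set.Ioc (bb (k+1)) (bb k) := by
  ext x
  constructor
  · rintro ⟨h1, h2⟩
    rcases le_or_gt 0 x with hx | hx
    · right
      rw [abs_of_nonneg hx] at h1 h2
      exact ⟨h1, h2⟩
    · left
      rw [abs_of_neg hx] at h1 h2
      constructor <;> linarith
  · rintro (⟨h1, h2⟩ | ⟨h1, h2⟩)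
    · have hx : x < 0 := lt_of_lt_of_le h2 (by linarith [bb_pos (k+1)])
      refine ⟨?_, ?_⟩ <;> rw [abs_of_neg hx] <;> linarith
    · have hx : 0 < x := lt_trans (bb_pos (k+1)) h1
      refine ⟨?_, ?_⟩ <;> rw [abs_of_pos hx] <;> linarith

lemma neg_half (k : ℕ) (c : ℝ) :
    ∫⁻ x in Set.Ico (-(bb k)) (-(bb (k+1))), ENNReal.ofReal (|x| ^ c) ∂volume
      = ∫⁻ x in Set.Ioc (bb (k+1)) (bb k), ENNReal.ofReal (|x| ^ c) ∂volume := by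
  have hset : Set.Ico (-(bb k)) (-(bb (k+1)))
      = (fun x : ℝ => -x) ⁻¹' Set.Ioc (bb (k+1)) (bb k) := by
    ext x
    simp only [Set.mem_Ico, Set.mem_preimage, Set.mem_Ioc]
    constructor
    · rintro ⟨h1, h2⟩; constructor <;> linarith
    · rintro ⟨h1, h2⟩; constructor <;> linarith
  rw [hset]
  have := (Measure.measurePreserving_neg (volume : Measure ℝ)).setLIntegral_comp_preimage_emb
    (MeasurableEquiv.neg ℝ).measurableEmbedding (fun y => ENNReal.ofReal (|y| ^ c))
    (Set.Ioc (bb (k+1)) (bb k))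
  simpa [abs_neg] using this

lemma term_eq (k : ℕ) (α : ℝ) :
    ∫⁻ x in {x : ℝ | |x| ≤ 1}, FF k x * ENNReal.ofReal (|x| ^ α) ∂volume = 2 * PP k α := by
  have hS : MeasurableSet {x : ℝ | |x| ≤ 1} := measurable_abs measurableSet_Iic
  have hA : (fun x => FF k x * ENNReal.ofReal (|x| ^ α))
      = (Sk k).indicator (fun x => ENNReal.ofReal (|x| ^ (α + ee k))) := by
    funext x
    by_cases hx : x ∈ Sk k
    · have hpos : (0:ℝ) < |x| := lt_trans (bb_pos (k+1)) hx.1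
      rw [FF, Set.indicator_of_mem hx, Set.indicator_of_mem hx,
        ← ENNReal.ofReal_mul (Real.rpow_nonneg (abs_nonneg x) _),
        ← Real.rpow_add hpos, add_comm (ee k) α]
    · rw [FF, Set.indicator_of_notMem hx, Set.indicator_of_notMem hx, zero_mul]
  rw [hA, lintegral_indicator (Sk_measurable k),
    Measure.restrict_restrict (Sk_measurable k),
    Set.inter_eq_left.2 (Sk_subset k), Sk_eq,
    lintegral_union measurableSet_Ioc, neg_half]
  · have hpos : ∫⁻ x in Set.Ioc (bb (k+1)) (bb k), ENNReal.ofReal (|x| ^ (α + ee k)) ∂volume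
        = PP k α := by
      apply setLIntegral_congr_fun measurableSet_Ioc
      exact fun x hx => by rw [abs_of_pos (lt_trans (bb_pos (k+1)) hx.1)]
    rw [hpos, two_mul]
  · rw [Set.disjoint_left]
    rintro x ⟨h1, h2⟩ ⟨h3, h4⟩
    have := bb_pos (k+1)
    linarith

lemma eta_repr (α : ℝ) :
    ∫⁻ x in {x : ℝ | |x| ≤ 1}, ENNReal.ofReal (|x| ^ α) ∂levyEta = ∑' k, 2 * PP k α := by
  have hS : MeasurableSet {x : ℝ | |x| ≤ 1} := measurable_abs measurableSet_Iic
  rw [levyEta_eq, setLIntegral_withDensity_eq_setLIntegral_mul volume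
    (Measurable.ennreal_tsum FF_measurable) ((measurable_abs.pow_const α).ennreal_ofReal) hS]
  have hpt : ∀ x, ((fun x => ∑' k, FF k x) * fun x => ENNReal.ofReal (|x| ^ α)) x
      = ∑' k, FF k x * ENNReal.ofReal (|x| ^ α) := by
    intro x
    simp only [Pi.mul_apply]
    rw [ENNReal.tsum_mul_right]
  have hts := lintegral_tsum (μ := volume.restrict {x : ℝ | |x| ≤ 1})
    (fun k => ((FF_measurable k).mul ((measurable_abs.pow_const α).ennreal_ofReal)).aemeasurable)
  simp only [Pi.mul_apply] at hts
  rw [lintegral_congr hpt, hts]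
  exact tsum_congr fun k => term_eq k α

lemma lint_Ioc_rpow {t q : ℝ} (ht : 0 < t) (hq : -1 < q) :
    ∫⁻ x in Set.Ioc 0 t, ENNReal.ofReal (x ^ q) ∂volume
      = ENNReal.ofReal (t ^ (q+1) / (q+1)) := by
  have hint : IntegrableOn (fun x : ℝ => x ^ q) (Set.Ioc 0 t) volume := by
    rw [← intervalIntegrable_iff_integrableOn_Ioc_of_le ht.le]
    exact intervalIntegral.intervalIntegrable_rpow' hq
  have hnn : 0 ≤ᵐ[volume.restrict (Set.Ioc 0 t)] fun x : ℝ => x ^ q := by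
    filter_upwards [ae_restrict_mem measurableSet_Ioc] with x hx
    exact Real.rpow_nonneg hx.1.le _
  rw [← ofReal_integral_eq_lintegral_ofReal hint hnn]
  congr 1
  rw [← intervalIntegral.integral_of_le ht.le, integral_rpow (Or.inl hq),
    Real.zero_rpow (by linarith), sub_zero]

lemma geom_bound {α : ℝ} (hα : 2 < α) (k : ℕ) :
    bb k ^ (α - 2) ≤ ((2:ℝ) ^ (-3*(α-2))) ^ k := by
  have h2 : (0:ℝ) ≤ 2 := by norm_num
  rw [← Real.rpow_natCast ((2:ℝ) ^ (-3*(α-2))) k, ← Real.rpow_mul h2]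
  unfold bb
  rw [← Real.rpow_mul (by positivity)]
  rcases k with _ | n
  · norm_num
  · push_cast
    have hb2 : (2:ℝ) ≤ (n:ℝ) + 1 + 1 := by
      have := Nat.cast_nonneg (α := ℝ) n; linarith
    calc ((n:ℝ) + 1 + 1) ^ (-(3:ℝ) * ((n:ℝ) + 1 + 1) * (α - 2))
        ≤ (2:ℝ) ^ (-(3:ℝ) * ((n:ℝ) + 1 + 1) * (α - 2)) := by
          apply Real.rpow_le_rpow_of_nonpos (by norm_num) hb2
          have := Nat.cast_nonneg (α := ℝ) n; nlinarith
      _ ≤ (2:ℝ) ^ (-(3:ℝ) * (α - 2) * ((n:ℝ) + 1)) := by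
          apply Real.rpow_le_rpow_of_exponent_le (by norm_num)
          have := Nat.cast_nonneg (α := ℝ) n; nlinarith

lemma upper_bound {α : ℝ} (hα : 2 < α) : (∑' k, 2 * PP k α) < ⊤ := by
  set r : ℝ := (2:ℝ) ^ (-3*(α-2)) with hrdef
  have hr0 : 0 < r := Real.rpow_pos_of_pos (by norm_num) _
  have hr1 : r < 1 := Real.rpow_lt_one_of_one_lt_of_neg (by norm_num) (by nlinarith)
  have hb : ∀ k : ℕ, 2 * PP k α ≤ ENNReal.ofReal (2 * (r ^ k / (α - 2))) := by
    intro k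
    have hq : (-1:ℝ) < α + ee k := by
      unfold ee
      have : (0:ℝ) < 1 / ((k:ℝ)+1) := by positivity
      linarith
    have h1 : PP k α ≤ ENNReal.ofReal (bb k ^ (α + ee k + 1) / (α + ee k + 1)) := by
      rw [← lint_Ioc_rpow (bb_pos k) hq]
      exact lintegral_mono_set (Set.Ioc_subset_Ioc_left (bb_pos (k+1)).le)
    have hq1 : α - 2 ≤ α + ee k + 1 := by
      unfold ee
      have : (0:ℝ) < 1 / ((k:ℝ)+1) := by positivity
      linarith
    have h2 : bb k ^ (α + ee k + 1) / (α + ee k + 1) ≤ r ^ k / (α - 2) := by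
      have hA : bb k ^ (α + ee k + 1) ≤ bb k ^ (α - 2) :=
        Real.rpow_le_rpow_of_exponent_ge (bb_pos k) (bb_le_one k) hq1
      have hB : bb k ^ (α - 2) ≤ r ^ k := geom_bound hα k
      have h0 : (0:ℝ) < α - 2 := by linarith
      exact div_le_div₀ (pow_nonneg hr0.le k) (hA.trans hB) h0 hq1
    calc 2 * PP k α ≤ 2 * ENNReal.ofReal (bb k ^ (α + ee k + 1) / (α + ee k + 1)) :=
          mul_le_mul_right h1 2
      _ ≤ 2 * ENNReal.ofReal (r ^ k / (α - 2)) :=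
          mul_le_mul_right (ENNReal.ofReal_le_ofReal h2) 2
      _ = ENNReal.ofReal (2 * (r ^ k / (α - 2))) := by
          rw [ENNReal.ofReal_mul (by norm_num : (0:ℝ) ≤ 2)]
          norm_num
  have hsum : Summable (fun k : ℕ => 2 * (r ^ k / (α - 2))) :=
    (((summable_geometric_of_lt_one hr0.le hr1).div_const (α - 2)).mul_left 2)
  calc (∑' k, 2 * PP k α) ≤ ∑' k, ENNReal.ofReal (2 * (r ^ k / (α - 2))) :=
        ENNReal.tsum_le_tsum hb
    _ = ENNReal.ofReal (∑' k, 2 * (r ^ k / (α - 2))) := by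
        rw [ENNReal.ofReal_tsum_of_nonneg]
        · intro k
          have h0 : (0:ℝ) < α - 2 := by linarith
          positivity
        · exact hsum
    _ < ⊤ := ENNReal.ofReal_lt_top

lemma bb_gap {k : ℕ} (hk : 1 ≤ k) : bb (k+1) ≤ bb k / 2 := by
  have hkpos : (0:ℝ) < (k:ℝ) + 1 := by positivity
  have h1 : bb (k+1) ≤ ((k:ℝ)+1) ^ (-(3:ℝ) * ((k:ℝ)+2)) := by
    unfold bb
    push_cast
    rw [show (k:ℝ)+1+1 = (k:ℝ)+2 by ring]
    apply Real.rpow_le_rpow_of_nonpos hkpos (by linarith)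
    nlinarith [Nat.cast_nonneg (α := ℝ) k]
  have h2 : ((k:ℝ)+1) ^ (-(3:ℝ) * ((k:ℝ)+2))
      = bb k * ((k:ℝ)+1) ^ (-(3:ℝ)) := by
    unfold bb
    rw [← Real.rpow_add hkpos]
    ring_nf
  have h3 : ((k:ℝ)+1) ^ (-(3:ℝ)) ≤ 1/2 := by
    have hk2 : (2:ℝ) ≤ (k:ℝ) + 1 := by
      have : (1:ℝ) ≤ (k:ℝ) := by exact_mod_cast hk
      linarith
    have := Real.rpow_le_rpow_of_nonpos (by norm_num : (0:ℝ) < 2) hk2 (by norm_num : (-3:ℝ) ≤ 0)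
    have h8 : (2:ℝ) ^ (-(3:ℝ)) = 1/8 := by
      rw [show (-(3:ℝ)) = ((-3:ℤ):ℝ) by norm_num, Real.rpow_intCast]
      norm_num
    rw [h8] at this
    linarith
  have hb := bb_pos k
  calc bb (k+1) ≤ bb k * ((k:ℝ)+1) ^ (-(3:ℝ)) := by rw [← h2]; exact h1
    _ ≤ bb k * (1/2) := by nlinarith [Real.rpow_nonneg hkpos.le (-(3:ℝ))]
    _ = bb k / 2 := by ring

lemma lower_term {α : ℝ} (hα : α < 2) {k : ℕ} (hk1 : 1 ≤ k)
    (hE : 1 ≤ 3 * ((k:ℝ)+1) * (2 - α) - 3) : (1:ℝ≥0∞) ≤ PP k α := by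
  set q : ℝ := α + ee k with hq
  have hkpos : (0:ℝ) < (k:ℝ) + 1 := by positivity
  have hq0 : q ≤ 0 := by
    unfold q; unfold ee
    have h1 : 1 / ((k:ℝ)+1) ≤ 1 := by
      rw [div_le_one hkpos]; linarith [Nat.cast_nonneg (α := ℝ) k]
    linarith
  have hb := bb_pos k
  have ha := bb_pos (k+1)
  -- pointwise lower bound
  have step1 : ∫⁻ x in Set.Ioc (bb (k+1)) (bb k), ENNReal.ofReal (bb k ^ q) ∂volume
      ≤ PP k α := by
    apply setLIntegral_mono ((measurable_id.pow_const q).ennreal_ofReal)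
    intro x hx
    exact ENNReal.ofReal_le_ofReal
      (Real.rpow_le_rpow_of_nonpos (lt_trans ha hx.1) hx.2 hq0)
  have step2 : ∫⁻ x in Set.Ioc (bb (k+1)) (bb k), ENNReal.ofReal (bb k ^ q) ∂volume
      = ENNReal.ofReal (bb k ^ q * (bb k - bb (k+1))) := by
    rw [setLIntegral_const, Real.volume_Ioc,
      ← ENNReal.ofReal_mul (Real.rpow_nonneg hb.le _)]
  have step3 : bb k ^ q * (bb k / 2) ≤ bb k ^ q * (bb k - bb (k+1)) := by
    have := bb_gap hk1
    have hr := Real.rpow_nonneg hb.le q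
    nlinarith
  have step4 : bb k ^ q * (bb k / 2) = bb k ^ (q + 1) / 2 := by
    rw [Real.rpow_add_one hb.ne']
    ring
  have step5 : (2:ℝ) ≤ bb k ^ (q + 1) := by
    unfold bb
    rw [← Real.rpow_mul hkpos.le]
    have hE' : 1 ≤ -3 * ((k:ℝ)+1) * (q + 1) := by
      have : ((k:ℝ)+1) * (q + 1) = ((k:ℝ)+1) * (α - 2) + 1 := by
        unfold q; unfold ee
        field_simp
        ring
      nlinarith [this]
    have hk2 : (2:ℝ) ≤ (k:ℝ) + 1 := by
      have : (1:ℝ) ≤ (k:ℝ) := by exact_mod_cast hk1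
      linarith
    calc (2:ℝ) = (2:ℝ) ^ (1:ℝ) := (Real.rpow_one 2).symm
      _ ≤ (2:ℝ) ^ (-3 * ((k:ℝ)+1) * (q + 1)) :=
          Real.rpow_le_rpow_of_exponent_le (by norm_num) hE'
      _ ≤ ((k:ℝ)+1) ^ (-3 * ((k:ℝ)+1) * (q + 1)) :=
          Real.rpow_le_rpow (by norm_num) hk2 (by linarith)
  calc (1:ℝ≥0∞) = ENNReal.ofReal 1 := by norm_num
    _ ≤ ENNReal.ofReal (bb k ^ q * (bb k / 2)) := by
        apply ENNReal.ofReal_le_ofReal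
        rw [step4]; linarith
    _ ≤ ENNReal.ofReal (bb k ^ q * (bb k - bb (k+1))) := ENNReal.ofReal_le_ofReal step3
    _ = _ := step2.symm
    _ ≤ PP k α := step1

lemma lower_bound {α : ℝ} (hα : α < 2) : (∑' k, 2 * PP k α) = ⊤ := by
  obtain ⟨K₀, hK₀⟩ := exists_nat_gt (4 / (3 * (2 - α)))
  set K := K₀ + 1 with hK
  have h2α : (0:ℝ) < 2 - α := by linarith
  have h4 : (4:ℝ) < (K₀:ℝ) * (3 * (2 - α)) := by
    rw [div_lt_iff₀ (by positivity)] at hK₀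
    exact hK₀
  have hterm : ∀ n : ℕ, (1:ℝ≥0∞) ≤ 2 * PP (n + K) α := by
    intro n
    have hk1 : 1 ≤ n + K := by omega
    have hE : 1 ≤ 3 * (((n + K : ℕ):ℝ)+1) * (2-α) - 3 := by
      have hc : (K₀:ℝ) ≤ ((n + K : ℕ):ℝ) := by
        push_cast
        have := Nat.cast_nonneg (α := ℝ) n
        linarith [show (K:ℝ) = (K₀:ℝ) + 1 by simp [hK]]
      nlinarith
    calc (1:ℝ≥0∞) ≤ PP (n+K) α := lower_term hα hk1 hE
      _ ≤ 2 * PP (n+K) α := le_mul_of_one_le_left' (by norm_num)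
  refine eq_top_iff.2 ?_
  calc (⊤:ℝ≥0∞) = ∑' _n : ℕ, (1:ℝ≥0∞) :=
        (ENNReal.tsum_const_eq_top_of_ne_zero one_ne_zero).symm
    _ ≤ ∑' n : ℕ, 2 * PP (n + K) α := ENNReal.tsum_le_tsum hterm
    _ ≤ ∑' k : ℕ, 2 * PP k α :=
        ENNReal.tsum_comp_le_tsum_of_injective (add_left_injective K) _


/-- the index `β = inf{α > 0 : ∫_{|x|≤1} |x|^α dη < ∞}` of the measure `η`
equals `2`. -/
theorem stmt_4 :
    sInf {α : ℝ | 0 < α ∧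
      (∫⁻ x in {x : ℝ | |x| ≤ 1}, ENNReal.ofReal (|x| ^ α) ∂levyEta) < ⊤} = 2 := by
  set A := {α : ℝ | 0 < α ∧
      (∫⁻ x in {x : ℝ | |x| ≤ 1}, ENNReal.ofReal (|x| ^ α) ∂levyEta) < ⊤} with hA
  have hsub : A ⊆ Set.Ici 2 := by
    rintro α ⟨hα0, hfin⟩
    by_contra h
    simp only [Set.mem_Ici, not_le] at h
    rw [eta_repr, lower_bound (by simpa using h)] at hfin
    exact absurd hfin (by simp)
  have hsup : ∀ α : ℝ, 2 < α → α ∈ A := fun α hα =>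
    ⟨by linarith, by rw [eta_repr]; exact upper_bound hα⟩
  apply le_antisymm
  · have hbdd : BddBelow A := ⟨2, fun α hα => hsub hα⟩
    refine le_of_forall_pos_le_add fun ε hε => ?_
    exact csInf_le hbdd (hsup _ (by linarith))
  · exact le_csInf ⟨3, hsup 3 (by norm_num)⟩ fun α hα => hsub hα
end

section
/- Let T > 0, p > 2, γ > p − 1. Let X = (X¹, X²) : [0,T] → ℝ² and let A be a real-valued function on {(s,t) : 0 ≤ s ≤ t ≤ T} satisfying the Chen relation A(s,u) = A(s,t) + A(t,u) + ½[(X¹(t)−X¹(s))(X²(u)−X²(t)) − (X²(t)−X²(s))(X¹(u)−X¹(t))] for all s ≤ t ≤ u. Suppose the weighted dyadic sums K₁ = Σ_{n=1}^∞ n^γ Σ_{k=0}^{2^n−1} |A(k2^{−n}T, (k+1)2^{−n}T)|^{p/2} and K₂ = Σ_{n=1}^∞ n^γ Σ_{k=0}^{2^n−1} ‖X((k+1)2^{−n}T) − X(k2^{−n}T)‖^p are both finite. Then there exist constants C₁, C₂ depending only on p and γ such that for every finite partition 0 = t_0 < t_1 < … < t_m = T of [0,T] whose points are dyadic multiples of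 T (i.e. each t_i = k 2^{−n} T for some integers k, n), Σ_{i=1}^m |A(t_{i−1}, t_i)|^{p/2} ≤ C₁ K₁ + C₂ K₂. In particular the (p/2)-variation of A along dyadic partition points is finite. -/
open Finset
open scoped NNReal


lemma lem_cross (a b : EuclideanSpace ℝ (Fin 2)) : |a 0 * b 1 - a 1 * b 0| ≤ ‖a‖ * ‖b‖ := by
  have ha : ‖a‖ = Real.sqrt (a 0 ^ 2 + a 1 ^ 2) := by
    rw [EuclideanSpace.norm_eq]
    congr 1
    rw [Fin.sum_univ_two]
    simp [sq_abs]
  have hb : ‖b‖ = Real.sqrt (b 0 ^ 2 + b 1 ^ 2) := by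
    rw [EuclideanSpace.norm_eq]
    congr 1
    rw [Fin.sum_univ_two]
    simp [sq_abs]
  rw [ha, hb, ← Real.sqrt_mul (by positivity)]
  rw [show |a 0 * b 1 - a 1 * b 0| = Real.sqrt ((a 0 * b 1 - a 1 * b 0) ^ 2) by
    rw [Real.sqrt_sq_eq_abs]]
  apply Real.sqrt_le_sqrt
  nlinarith [sq_nonneg (a 0 * b 0 + a 1 * b 1)]

lemma lem_two_split {a b q : ℝ} (ha : 0 ≤ a) (hb : 0 ≤ b) (hq : 1 ≤ q) :
    (a + b) ^ q ≤ 2 ^ (q - 1) * (a ^ q + b ^ q) := by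
  have h := NNReal.rpow_add_le_mul_rpow_add_rpow (a.toNNReal) (b.toNNReal) hq
  have h' := NNReal.coe_le_coe.2 h
  push_cast at h'
  rwa [Real.coe_toNNReal _ ha, Real.coe_toNNReal _ hb] at h'

lemma lem_holder (q γ : ℝ) (hq : 1 < q) (s : Finset ℕ) (ℓ : ℕ → ℕ)
    (hℓ : ∀ j ∈ s, 1 ≤ ℓ j) (c : ℕ → ℝ) (hc : ∀ j ∈ s, 0 ≤ c j) :
    (∑ j ∈ s, c j) ^ q ≤
      (∑ j ∈ s, ((ℓ j : ℝ)) ^ (-(γ / (q - 1)))) ^ (q - 1) * ∑ j ∈ s, (ℓ j : ℝ) ^ γ * c j ^ q := by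
  have hq0 : 0 < q := lt_trans one_pos hq
  have hq1 : 0 < q - 1 := by linarith
  have hconj : Real.HolderConjugate (q / (q - 1)) q := by
    constructor
    · field_simp; ring
    · exact div_pos hq0 hq1
    · exact hq0
  have e1 : ∀ j ∈ s, ((ℓ j : ℝ) ^ (-(γ / q))) ^ (q / (q - 1)) = (ℓ j : ℝ) ^ (-(γ / (q - 1))) := by
    intro j hj
    rw [← Real.rpow_mul (Nat.cast_nonneg _)]
    congr 1
    field_simp
  have e2 : ∀ j ∈ s, ((ℓ j : ℝ) ^ (γ / q) * c j) ^ q = (ℓ j : ℝ) ^ γ * c j ^ q := by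
    intro j hj
    rw [Real.mul_rpow (Real.rpow_nonneg (Nat.cast_nonneg _) _) (hc j hj),
      ← Real.rpow_mul (Nat.cast_nonneg _)]
    congr 2
    field_simp
  have key : ∑ j ∈ s, c j ≤
      (∑ j ∈ s, ((ℓ j : ℝ)) ^ (-(γ / (q - 1)))) ^ (1 / (q / (q - 1)))
        * (∑ j ∈ s, (ℓ j : ℝ) ^ γ * c j ^ q) ^ (1 / q) := by
    have H := Real.inner_le_Lp_mul_Lq_of_nonneg s hconj
      (f := fun j => (ℓ j : ℝ) ^ (-(γ / q))) (g := fun j => (ℓ j : ℝ) ^ (γ / q) * c j)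
      (fun j hj => Real.rpow_nonneg (Nat.cast_nonneg _) _)
      (fun j hj => mul_nonneg (Real.rpow_nonneg (Nat.cast_nonneg _) _) (hc j hj))
    rw [Finset.sum_congr rfl e1, Finset.sum_congr rfl e2] at H
    refine le_trans (le_of_eq ?_) H
    apply Finset.sum_congr rfl
    intro j hj
    have hpos : (0:ℝ) < (ℓ j : ℝ) := by exact_mod_cast hℓ j hj
    rw [← mul_assoc, ← Real.rpow_add hpos]
    simp
  have hS1 : (0:ℝ) ≤ ∑ j ∈ s, ((ℓ j : ℝ)) ^ (-(γ / (q - 1))) :=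
    Finset.sum_nonneg fun j hj => Real.rpow_nonneg (Nat.cast_nonneg _) _
  have hS2 : (0:ℝ) ≤ ∑ j ∈ s, (ℓ j : ℝ) ^ γ * c j ^ q :=
    Finset.sum_nonneg fun j hj => mul_nonneg (Real.rpow_nonneg (Nat.cast_nonneg _) _)
      (Real.rpow_nonneg (hc j hj) _)
  have hcs : (0:ℝ) ≤ ∑ j ∈ s, c j := Finset.sum_nonneg hc
  calc (∑ j ∈ s, c j) ^ q ≤
      ((∑ j ∈ s, ((ℓ j : ℝ)) ^ (-(γ / (q - 1)))) ^ (1 / (q / (q - 1)))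
        * (∑ j ∈ s, (ℓ j : ℝ) ^ γ * c j ^ q) ^ (1 / q)) ^ q :=
        Real.rpow_le_rpow hcs key (le_of_lt hq0)
    _ = _ := by
        rw [Real.mul_rpow (Real.rpow_nonneg hS1 _) (Real.rpow_nonneg hS2 _),
          ← Real.rpow_mul hS1, ← Real.rpow_mul hS2]
        rw [show 1 / (q / (q - 1)) * q = q - 1 by field_simp, show 1 / q * q = 1 by
          field_simp]
        rw [Real.rpow_one]



section
variable {T : ℝ} {X : ℝ → EuclideanSpace ℝ (Fin 2)} {A : ℝ → ℝ → ℝ}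

lemma lem_Ass
    (chen : ∀ s t u : ℝ, 0 ≤ s → s ≤ t → t ≤ u → u ≤ T →
      A s u = A s t + A t u +
        (1 / 2) * ((X t 0 - X s 0) * (X u 1 - X t 1) - (X t 1 - X s 1) * (X u 0 - X t 0)))
    {s : ℝ} (h0 : 0 ≤ s) (hT : s ≤ T) : A s s = 0 := by
  have := chen s s s h0 le_rfl le_rfl hT
  simp at this
  linarith

lemma lem_chen_abs
    (chen : ∀ s t u : ℝ, 0 ≤ s → s ≤ t → t ≤ u → u ≤ T →
      A s u = A s t + A t u +
        (1 / 2) * ((X t 0 - X s 0) * (X u 1 - X t 1) - (X t 1 - X s 1) * (X u 0 - X t 0)))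
    {s t u : ℝ} (h0 : 0 ≤ s) (hst : s ≤ t) (htu : t ≤ u) (huT : u ≤ T) :
    |A s u| ≤ |A s t| + |A t u| + (1/2) * (‖X t - X s‖ * ‖X u - X t‖) := by
  have h := chen s t u h0 hst htu huT
  have hc := lem_cross (X t - X s) (X u - X t)
  simp only [PiLp.sub_apply] at hc
  calc |A s u| ≤ |A s t| + |A t u| + (1/2) * |(X t 0 - X s 0) * (X u 1 - X t 1)
        - (X t 1 - X s 1) * (X u 0 - X t 0)| := by
        rw [h]
        refine le_trans (abs_add_le _ _) ?_
        gcongr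
        · exact abs_add_le _ _
        · rw [abs_mul, abs_of_nonneg (by norm_num : (0:ℝ) ≤ 1/2)]
    _ ≤ _ := by
        have h2 : (0:ℝ) ≤ 1/2 := by norm_num
        nlinarith [abs_nonneg ((X t 0 - X s 0) * (X u 1 - X t 1) - (X t 1 - X s 1) * (X u 0 - X t 0))]
  
lemma lem_chain
    (chen : ∀ s t u : ℝ, 0 ≤ s → s ≤ t → t ≤ u → u ≤ T →
      A s u = A s t + A t u +
        (1 / 2) * ((X t 0 - X s 0) * (X u 1 - X t 1) - (X t 1 - X s 1) * (X u 0 - X t 0)))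
    (M : ℕ) (w : ℕ → ℝ) (hstep : ∀ j, j < M → w j ≤ w (j+1)) (h0 : 0 ≤ w 0) (hMT : w M ≤ T) :
    ‖X (w M) - X (w 0)‖ ≤ ∑ j ∈ range M, ‖X (w (j+1)) - X (w j)‖ ∧
    |A (w 0) (w M)| ≤ (∑ j ∈ range M, |A (w j) (w (j+1))|)
      + (1/2) * (∑ j ∈ range M, ‖X (w (j+1)) - X (w j)‖)^2 := by
  induction M with
  | zero =>
    constructor
    · simp
    · rw [lem_Ass chen h0 hMT]
      simp
  | succ M IH =>
    have hstep' : ∀ j, j < M → w j ≤ w (j+1) := fun j hj => hstep j (Nat.lt_succ_of_lt hj)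
    have hMM : w M ≤ w (M+1) := hstep M (Nat.lt_succ_self M)
    have hMT' : w M ≤ T := le_trans hMM hMT
    obtain ⟨IH1, IH2⟩ := IH hstep' hMT'
    have mono : ∀ j, j ≤ M → w 0 ≤ w j := by
      intro j hj
      induction j with
      | zero => exact le_rfl
      | succ k IHk =>
        exact le_trans (IHk (Nat.le_of_succ_le hj)) (hstep k (by omega))
    have h0M : w 0 ≤ w M := mono M le_rfl
    have tri : ‖X (w (M+1)) - X (w 0)‖ ≤ ‖X (w (M+1)) - X (w M)‖ + ‖X (w M) - X (w 0)‖ := by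
      calc ‖X (w (M+1)) - X (w 0)‖ = ‖(X (w (M+1)) - X (w M)) + (X (w M) - X (w 0))‖ := by
            rw [sub_add_sub_cancel]
        _ ≤ _ := norm_add_le _ _
    constructor
    · rw [Finset.sum_range_succ]
      linarith
    · have habs := lem_chen_abs chen h0 h0M hMM hMT
      rw [Finset.sum_range_succ, Finset.sum_range_succ]
      set S := ∑ j ∈ range M, ‖X (w (j+1)) - X (w j)‖ with hS
      have hS0 : 0 ≤ S := Finset.sum_nonneg fun j _ => norm_nonneg _
      have hx0 : 0 ≤ ‖X (w (M+1)) - X (w M)‖ := norm_nonneg _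
      have hn0 : 0 ≤ ‖X (w M) - X (w 0)‖ := norm_nonneg _
      nlinarith [mul_nonneg (sub_nonneg.2 IH1) hx0, sq_nonneg (‖X (w (M+1)) - X (w M)‖)]
end


/-- least multiple of `d` that is `≥ u` -/
def cmN (d u : ℕ) : ℕ := d * ((u + d - 1) / d)
/-- greatest multiple of `d` that is `≤ v` -/
def fmN (d v : ℕ) : ℕ := d * (v / d)

lemma cmN_one (u : ℕ) : cmN 1 u = u := by simp [cmN]
lemma fmN_one (v : ℕ) : fmN 1 v = v := by simp [fmN]
lemma dvd_cmN (d u : ℕ) : d ∣ cmN d u := Dvd.intro _ rfl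
lemma dvd_fmN (d v : ℕ) : d ∣ fmN d v := Dvd.intro _ rfl

lemma le_cmN (d u : ℕ) (hd : 0 < d) : u ≤ cmN d u := by
  have h1 := Nat.div_add_mod (u + d - 1) d
  have h2 := Nat.mod_lt (u + d - 1) hd
  unfold cmN
  omega

lemma cmN_lt (d u : ℕ) (hd : 0 < d) : cmN d u < u + d := by
  have h1 := Nat.mul_div_le (u + d - 1) d
  unfold cmN
  omega

lemma fmN_le (d v : ℕ) : fmN d v ≤ v := Nat.mul_div_le v d

lemma lt_fmN_add (d v : ℕ) (hd : 0 < d) : v < fmN d v + d := by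
  have h1 := Nat.div_add_mod v d
  have h2 := Nat.mod_lt v hd
  unfold fmN
  omega

lemma cmN_min {d u m : ℕ} (hd : 0 < d) (hdvd : d ∣ m) (hum : u ≤ m) : cmN d u ≤ m := by
  obtain ⟨j, rfl⟩ := hdvd
  unfold cmN
  have h1 : u + d - 1 < d * (j + 1) := by
    rw [Nat.mul_succ]
    omega
  have h2 : (u + d - 1) / d < j + 1 := Nat.div_lt_of_lt_mul (by rw [Nat.mul_comm] at h1 ⊢; omega)
  calc d * ((u + d - 1) / d) ≤ d * j := Nat.mul_le_mul_left d (by omega)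
    _ = d * j := rfl

lemma fmN_max {d v m : ℕ} (hd : 0 < d) (hdvd : d ∣ m) (hmv : m ≤ v) : m ≤ fmN d v := by
  obtain ⟨j, rfl⟩ := hdvd
  unfold fmN
  exact Nat.mul_le_mul_left d ((Nat.le_div_iff_mul_le hd).2 (by rw [Nat.mul_comm]; omega))


noncomputable def Zc (x : ℝ) : ℝ := ∑' n : ℕ, ((n : ℝ) + 1) ^ (-x)

lemma summable_Zc {x : ℝ} (hx : 1 < x) : Summable (fun n : ℕ => ((n : ℝ) + 1) ^ (-x)) := by
  have h := Real.summable_nat_rpow (p := -x).2 (by linarith)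
  have h2 := (_root_.summable_nat_add_iff (f := fun n : ℕ => (n : ℝ) ^ (-x)) 1).2 h
  convert h2 using 2 with n
  push_cast
  · rfl
  · rw [Nat.cast_succ]

lemma Zc_nonneg (x : ℝ) : 0 ≤ Zc x :=
  tsum_nonneg fun n => Real.rpow_nonneg (by positivity) _

def levfun (N nstar : ℕ) : ℕ → ℕ := fun j =>
  if j < N then N - j else if j ≤ N + 1 then nstar else nstar + (j - (N + 1))

lemma levfun_pos {N nstar : ℕ} (h1 : 1 ≤ nstar) (j : ℕ) : 1 ≤ levfun N nstar j := by
  unfold levfun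
  split
  · omega
  · split <;> omega

lemma lem_assemble (q γ : ℝ) (hq : 1 < q) (hγ' : 1 < γ / (q - 1))
    (N nstar : ℕ) (h1 : 1 ≤ nstar) (hnN : nstar ≤ N) (b G : ℕ → ℝ)
    (hbn : ∀ j, 0 ≤ b j) (hGn : ∀ ν, 0 ≤ G ν)
    (hb : ∀ j ∈ range (2 * N + 2),
      ((levfun N nstar j : ℝ)) ^ γ * b j ^ q ≤
        (if levfun N nstar j ≤ N then G (levfun N nstar j) else 0)) :
    (∑ j ∈ range (2 * N + 2), b j) ^ q ≤
      (2 * Zc (γ / (q - 1)) + 2) ^ (q - 1) * 4 * ∑ n ∈ range N, G (n + 1) := by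
  have hq1 : 0 < q - 1 := by linarith
  set γ' := γ / (q - 1) with hγdef
  have hsummable := summable_Zc hγ'
  -- the H function
  set H : ℕ → ℝ := fun ν => if 1 ≤ ν ∧ ν ≤ N then G ν else 0 with hH
  have hHn : ∀ ν, 0 ≤ H ν := by
    intro ν
    simp only [hH]
    split
    · exact hGn ν
    · exact le_rfl
  set F := ∑ n ∈ range N, G (n + 1) with hF
  have hFn : 0 ≤ F := Finset.sum_nonneg fun n _ => hGn _
  -- sum of H over a large range equals F
  have hHF : ∑ ν ∈ range (2 * N + 3), H ν = F := by
    rw [show 2 * N + 3 = (N + 1) + (N + 2) by ring, Finset.sum_range_add]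
    have hz : ∑ x ∈ range (N + 2), H (N + 1 + x) = 0 := by
      apply Finset.sum_eq_zero
      intro x _
      simp only [hH]
      rw [if_neg]
      omega
    rw [hz, add_zero, Finset.sum_range_succ']
    have h0 : H 0 = 0 := by simp [hH]
    rw [h0, add_zero, hF]
    apply Finset.sum_congr rfl
    intro n hn
    simp only [Finset.mem_range] at hn
    simp only [hH]
    rw [if_pos ⟨by omega, by omega⟩]
  have hHleF : ∀ ν, ν ≤ 2 * N + 2 → H ν ≤ F := by
    intro ν hν
    rw [← hHF]
    exact Finset.single_le_sum (fun i _ => hHn i) (Finset.mem_range.2 (by omega))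
  -- split lemma
  have hsplit : ∀ f : ℕ → ℝ, ∑ j ∈ range (2 * N + 2), f j =
      (∑ j ∈ range N, f j) + (f N + f (N + 1)) + ∑ i ∈ range N, f (N + 2 + i) := by
    intro f
    rw [show 2 * N + 2 = (N + 2) + N by ring, Finset.sum_range_add,
      Finset.sum_range_succ, Finset.sum_range_succ]
    ring
  -- Hölder
  have holder := lem_holder q γ hq (range (2 * N + 2)) (levfun N nstar)
    (fun j _ => levfun_pos h1 j) b (fun j _ => hbn j)
  -- weight sum bound
  have hW : ∑ j ∈ range (2 * N + 2), ((levfun N nstar j : ℝ)) ^ (-γ') ≤ 2 * Zc γ' + 2 := by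
    rw [hsplit]
    have hP1 : ∑ j ∈ range N, ((levfun N nstar j : ℝ)) ^ (-γ') ≤ Zc γ' := by
      have e : ∀ j ∈ range N, ((levfun N nstar j : ℝ)) ^ (-γ') = ((N - 1 - j : ℕ) + 1 : ℝ) ^ (-γ') := by
        intro j hj
        simp only [Finset.mem_range] at hj
        unfold levfun
        rw [if_pos hj]
        have h' : N - j = (N - 1 - j) + 1 := by omega
        rw [h']
        push_cast
        ring_nf
      rw [Finset.sum_congr rfl e]
      rw [Finset.sum_range_reflect (fun j => ((j : ℝ) + 1) ^ (-γ')) N]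
      exact Summable.sum_le_tsum (range N) (fun n _ => Real.rpow_nonneg (by positivity) _) hsummable
    have e1 : levfun N nstar N = nstar := by
      unfold levfun; rw [if_neg (by omega), if_pos (by omega)]
    have e2 : levfun N nstar (N + 1) = nstar := by
      unfold levfun; rw [if_neg (by omega), if_pos (by omega)]
    have hP2 : ((levfun N nstar N : ℝ)) ^ (-γ') ≤ 1 ∧ ((levfun N nstar (N+1) : ℝ)) ^ (-γ') ≤ 1 := by
      rw [e1, e2]
      constructor <;>
      · apply Real.rpow_le_one_of_one_le_of_nonpos
        · exact_mod_cast Nat.one_le_cast.2 h1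
        · linarith
    have hP3 : ∑ i ∈ range N, ((levfun N nstar (N + 2 + i) : ℝ)) ^ (-γ') ≤ Zc γ' := by
      have e : ∀ i ∈ range N, ((levfun N nstar (N + 2 + i) : ℝ)) ^ (-γ') ≤ ((i : ℝ) + 1) ^ (-γ') := by
        intro i hi
        unfold levfun
        rw [if_neg (by omega), if_neg (by omega)]
        apply Real.rpow_le_rpow_of_nonpos (by positivity)
        · push_cast [show N + 2 + i - (N + 1) = i + 1 by omega]
          have : (1 : ℝ) ≤ nstar := Nat.one_le_cast.2 h1
          linarith
        · linarith
      refine le_trans (Finset.sum_le_sum e) ?_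
      exact Summable.sum_le_tsum (range N) (fun n _ => Real.rpow_nonneg (by positivity) _) hsummable
    have : (0:ℝ) ≤ Zc γ' := Zc_nonneg _
    linarith [hP2.1, hP2.2]
  -- main term bound
  have hM : ∑ j ∈ range (2 * N + 2), ((levfun N nstar j : ℝ)) ^ γ * b j ^ q ≤ 4 * F := by
    have step1 : ∀ j ∈ range (2 * N + 2),
        ((levfun N nstar j : ℝ)) ^ γ * b j ^ q ≤ H (levfun N nstar j) := by
      intro j hj
      refine le_trans (hb j hj) ?_
      simp only [hH]
      have := levfun_pos (N := N) h1 j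
      by_cases hle : levfun N nstar j ≤ N
      · rw [if_pos hle, if_pos ⟨this, hle⟩]
      · rw [if_neg hle, if_neg (by omega)]
    refine le_trans (Finset.sum_le_sum step1) ?_
    rw [hsplit (fun j => H (levfun N nstar j))]
    have hQ1 : ∑ j ∈ range N, H (levfun N nstar j) = F := by
      have e : ∀ j ∈ range N, H (levfun N nstar j) = H ((N - 1 - j) + 1) := by
        intro j hj
        simp only [Finset.mem_range] at hj
        unfold levfun
        rw [if_pos hj]
        congr 1
        omega
      rw [Finset.sum_congr rfl e, Finset.sum_range_reflect (fun j => H (j + 1)) N, hF]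
      apply Finset.sum_congr rfl
      intro n hn
      simp only [Finset.mem_range] at hn
      simp only [hH]
      rw [if_pos ⟨by omega, by omega⟩]
    have hQ2 : H (levfun N nstar N) + H (levfun N nstar (N + 1)) ≤ 2 * F := by
      have e1 : levfun N nstar N = nstar := by unfold levfun; rw [if_neg (by omega), if_pos (by omega)]
      have e2 : levfun N nstar (N + 1) = nstar := by unfold levfun; rw [if_neg (by omega), if_pos (by omega)]
      rw [e1, e2]
      have := hHleF nstar (by omega)
      linarith
    have hQ3 : ∑ i ∈ range N, H (levfun N nstar (N + 2 + i)) ≤ F := by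
      have e : ∀ i ∈ range N, H (levfun N nstar (N + 2 + i)) = H (nstar + 1 + i) := by
        intro i hi
        unfold levfun
        rw [if_neg (by omega), if_neg (by omega)]
        congr 1
        omega
      rw [Finset.sum_congr rfl e]
      rw [show (∑ i ∈ range N, H (nstar + 1 + i)) = ∑ ν ∈ (range N).image (fun i => nstar + 1 + i), H ν by
        rw [Finset.sum_image (fun x _ y _ h => by omega)]]
      rw [← hHF]
      apply Finset.sum_le_sum_of_subset_of_nonneg
      · intro ν hν
        simp only [Finset.mem_image, Finset.mem_range] at hν ⊢
        obtain ⟨i, hi, rfl⟩ := hν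
        omega
      · intro ν _ _
        exact hHn ν
    linarith
  -- combine
  refine le_trans holder ?_
  have hWn : 0 ≤ ∑ j ∈ range (2 * N + 2), ((levfun N nstar j : ℝ)) ^ (-γ') :=
    Finset.sum_nonneg fun j _ => Real.rpow_nonneg (by positivity) _
  have hMn : 0 ≤ ∑ j ∈ range (2 * N + 2), ((levfun N nstar j : ℝ)) ^ γ * b j ^ q :=
    Finset.sum_nonneg fun j _ => mul_nonneg (Real.rpow_nonneg (by positivity) _)
      (Real.rpow_nonneg (hbn j) _)
  calc (∑ j ∈ range (2*N+2), ((levfun N nstar j : ℝ)) ^ (-γ')) ^ (q-1)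
        * ∑ j ∈ range (2*N+2), ((levfun N nstar j : ℝ)) ^ γ * b j ^ q
      ≤ (2 * Zc γ' + 2) ^ (q - 1) * (4 * F) := by
        apply mul_le_mul
        · exact Real.rpow_le_rpow hWn hW (le_of_lt hq1)
        · exact hM
        · exact hMn
        · exact Real.rpow_nonneg (by linarith [Zc_nonneg γ']) _
    _ = (2 * Zc γ' + 2) ^ (q - 1) * 4 * F := by ring


section KEY
variable {T p γ : ℝ} {X : ℝ → EuclideanSpace ℝ (Fin 2)} {A : ℝ → ℝ → ℝ}

lemma lem_grid (T : ℝ) {N ν : ℕ} (k : ℕ) (hν : ν ≤ N) :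
    ((k * 2 ^ (N - ν) : ℕ) : ℝ) * T / 2 ^ N = (k : ℝ) * T / 2 ^ ν := by
  have h2 : (2:ℝ) ^ N = 2 ^ ν * 2 ^ (N - ν) := by
    rw [← pow_add, Nat.add_sub_cancel' hν]
  have h3 : ((2:ℝ)) ^ ν ≠ 0 := by positivity
  have h4 : ((2:ℝ)) ^ (N - ν) ≠ 0 := by positivity
  push_cast
  rw [h2]
  field_simp

/-- index set of dyadic intervals of level `ν` contained in `[u,v]` (grid scale `2^N`) -/
def fsetD (N u v ν : ℕ) : Finset ℕ :=
  (range (2 ^ ν)).filter (fun k => u ≤ k * 2 ^ (N - ν) ∧ (k + 1) * 2 ^ (N - ν) ≤ v)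

set_option maxHeartbeats 2000000 in
lemma lem_key (hT : 0 < T) (hp : 2 < p) (hγ : p - 1 < γ)
    (chen : ∀ s t u : ℝ, 0 ≤ s → s ≤ t → t ≤ u → u ≤ T →
      A s u = A s t + A t u +
        (1 / 2) * ((X t 0 - X s 0) * (X u 1 - X t 1) - (X t 1 - X s 1) * (X u 0 - X t 0)))
    (N u v : ℕ) (hN : 1 ≤ N) (huv : u < v) (hv : v ≤ 2 ^ N) :
    |A ((u : ℝ) * T / 2 ^ N) ((v : ℝ) * T / 2 ^ N)| ^ (p / 2) ≤
      (2:ℝ) ^ (p/2 - 1) * ((2 * Zc (γ / (p/2 - 1)) + 2) ^ (p/2 - 1) * 4) *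
        (∑ n ∈ range N, ((n + 1 : ℕ) : ℝ) ^ γ * ∑ k ∈ fsetD N u v (n+1),
          |A ((k : ℝ) * T / 2 ^ (n+1)) (((k : ℝ) + 1) * T / 2 ^ (n+1))| ^ (p / 2))
      + (2:ℝ) ^ (p/2 - 1) * (1/2 : ℝ) ^ (p/2) * ((2 * Zc (γ / (p - 1)) + 2) ^ (p - 1) * 4) *
        (∑ n ∈ range N, ((n + 1 : ℕ) : ℝ) ^ γ * ∑ k ∈ fsetD N u v (n+1),
          ‖X (((k : ℝ) + 1) * T / 2 ^ (n+1)) - X ((k : ℝ) * T / 2 ^ (n+1))‖ ^ p) := by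
  classical
  set q := p / 2 with hqdef
  have hq : 1 < q := by rw [hqdef]; linarith
  have hq0 : 0 < q := by linarith
  -- dyadic scales
  set d : ℕ → ℕ := fun n => 2 ^ (N - n) with hddef
  have hd : ∀ n, 0 < d n := fun n => pow_pos (by norm_num) _
  set uu : ℕ → ℕ := fun n => cmN (d n) u with huudef
  set vv : ℕ → ℕ := fun n => fmN (d n) v with hvvdef
  have hdd : ∀ {m n : ℕ}, m ≤ n → d n ∣ d m := by
    intro m n h
    exact pow_dvd_pow 2 (Nat.sub_le_sub_left h N)
  have huu_ge : ∀ n, u ≤ uu n := fun n => le_cmN _ _ (hd n)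
  have huu_dvd : ∀ n, d n ∣ uu n := fun n => dvd_cmN _ _
  have hvv_le : ∀ n, vv n ≤ v := fun n => fmN_le _ _
  have hvv_dvd : ∀ n, d n ∣ vv n := fun n => dvd_fmN _ _
  have hdN : d N = 1 := by simp [hddef]
  have huuN : uu N = u := by rw [huudef]; simp only [hdN]; exact cmN_one u
  have hvvN : vv N = v := by rw [hvvdef]; simp only [hdN]; exact fmN_one v
  have huu_anti : ∀ {m n : ℕ}, m ≤ n → uu n ≤ uu m := by
    intro m n h
    exact cmN_min (hd n) (dvd_trans (hdd h) (huu_dvd m)) (huu_ge m)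
  have hvv_mono : ∀ {m n : ℕ}, m ≤ n → vv m ≤ vv n := by
    intro m n h
    exact fmN_max (hd n) (dvd_trans (hdd h) (hvv_dvd m)) (hvv_le m)
  have hd2 : ∀ n, n + 1 ≤ N → d n = 2 * d (n + 1) := by
    intro n h
    show (2:ℕ) ^ (N - n) = 2 * 2 ^ (N - (n+1))
    rw [show N - n = (N - (n+1)) + 1 by omega, pow_succ]
    ring
  have hstepL : ∀ ν, ν + 1 ≤ N → uu ν ≤ uu (ν + 1) + d (ν + 1) := by
    intro ν hν
    obtain ⟨k, hk⟩ := huu_dvd (ν + 1)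
    rcases Nat.even_or_odd k with ⟨j, hj⟩ | ⟨j, hj⟩
    · have hdvd : d ν ∣ uu (ν + 1) := by
        rw [hk, hj, hd2 ν hν]
        exact ⟨j, by ring⟩
      have h9 : uu ν ≤ uu (ν + 1) := cmN_min (hd ν) hdvd (huu_ge (ν + 1))
      omega
    · have hdvd : d ν ∣ uu (ν + 1) + d (ν + 1) := by
        rw [hk, hj, hd2 ν hν]
        exact ⟨j + 1, by ring⟩
      have h9 : uu ν ≤ uu (ν + 1) + d (ν + 1) :=
        cmN_min (hd ν) hdvd (le_trans (huu_ge (ν + 1)) (Nat.le_add_right _ _))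
      omega
  have hstepR : ∀ ν, ν + 1 ≤ N → vv (ν + 1) ≤ vv ν + d (ν + 1) := by
    intro ν hν
    obtain ⟨k, hk⟩ := hvv_dvd (ν + 1)
    rcases Nat.even_or_odd k with ⟨j, hj⟩ | ⟨j, hj⟩
    · have hdvd : d ν ∣ vv (ν + 1) := by
        rw [hk, hj, hd2 ν hν]
        exact ⟨j, by ring⟩
      have h9 : vv (ν + 1) ≤ vv ν := fmN_max (hd ν) hdvd (hvv_le (ν + 1))
      omega
    · have hge : d (ν + 1) ≤ vv (ν + 1) := by
        rw [hk, hj]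
        exact Nat.le_mul_of_pos_right _ (by omega)
      have hdvd : d ν ∣ vv (ν + 1) - d (ν + 1) := by
        rw [hk, hj, hd2 ν hν]
        exact ⟨j, by ring_nf; omega⟩
      have hle : vv (ν + 1) - d (ν + 1) ≤ v := le_trans (Nat.sub_le _ _) (hvv_le _)
      have h9 : vv (ν + 1) - d (ν + 1) ≤ vv ν := fmN_max (hd ν) hdvd hle
      omega
  -- minimal level where the rounded points cross
  have hPN : 1 ≤ N ∧ uu N ≤ vv N := ⟨hN, by rw [huuN, hvvN]; exact le_of_lt huv⟩
  have hex : ∃ n, 1 ≤ n ∧ uu n ≤ vv n := ⟨N, hPN⟩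
  set nstar := Nat.find hex with hnsdef
  obtain ⟨h1, huvstar⟩ : 1 ≤ nstar ∧ uu nstar ≤ vv nstar := Nat.find_spec hex
  have hnN : nstar ≤ N := Nat.find_min' hex hPN
  have hmin : ∀ m, m < nstar → ¬(1 ≤ m ∧ uu m ≤ vv m) := fun m hm => Nat.find_min hex hm
  have hmid : vv nstar ≤ uu nstar + 2 * d nstar := by
    rcases eq_or_lt_of_le h1 with h1' | h1'
    · have h2N : (2:ℕ) ^ N = 2 * d 1 := by
        show (2:ℕ) ^ N = 2 * 2 ^ (N - 1)
        rw [← pow_succ']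
        congr 1
        omega
      have hv1 := hvv_le nstar
      have hu1 := huu_ge nstar
      have hd1 : d nstar = d 1 := by rw [h1']
      omega
    · have hnot := hmin (nstar - 1) (by omega)
      push_neg at hnot
      have hlt : vv (nstar - 1) < uu (nstar - 1) := by
        have := hnot (by omega)
        omega
      have hclaim : v < u + d (nstar - 1) := by
        by_contra hcon
        push_neg at hcon
        have h8 : uu (nstar - 1) < u + d (nstar - 1) := cmN_lt _ _ (hd _)
        have h1le : uu (nstar - 1) ≤ v := by omega
        have h9 : uu (nstar - 1) ≤ vv (nstar - 1) :=
          fmN_max (hd (nstar - 1)) (huu_dvd (nstar - 1)) h1le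
        omega
      have hdm : d (nstar - 1) = 2 * d nstar := by
        have := hd2 (nstar - 1) (by omega)
        rwa [show nstar - 1 + 1 = nstar by omega] at this
      have h5 := hvv_le nstar
      have h6 := huu_ge nstar
      omega
  -- the middle point
  set c : ℕ := min (uu nstar + d nstar) (vv nstar) with hcdef
  have hc1 : uu nstar ≤ c := le_min (Nat.le_add_right _ _) huvstar
  have hc2 : c ≤ vv nstar := min_le_right _ _
  have hc3 : c ≤ uu nstar + d nstar := min_le_left _ _
  have hc4 : vv nstar ≤ c + d nstar := by
    rcases min_cases (uu nstar + d nstar) (vv nstar) with ⟨he, hle⟩ | ⟨he, hle⟩ <;>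
      rw [hcdef, he] <;> omega
  have hcdvd : d nstar ∣ c := by
    rcases min_cases (uu nstar + d nstar) (vv nstar) with ⟨he, _⟩ | ⟨he, _⟩ <;> rw [hcdef, he]
    · exact Nat.dvd_add (huu_dvd nstar) dvd_rfl
    · exact hvv_dvd nstar
  -- the chain of grid points
  set intW : ℕ → ℕ := fun j =>
    if j ≤ N then uu (max (N - j) nstar)
    else if j = N + 1 then c
    else vv (min (nstar + (j - (N + 2))) N) with hintWdef
  have hIW_u : ∀ j, u ≤ intW j := by
    intro j
    rw [hintWdef]
    simp only
    split
    · exact huu_ge _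
    · split
      · exact le_trans (huu_ge nstar) hc1
      · exact le_trans (le_trans (huu_ge nstar) huvstar)
          (hvv_mono (le_min (Nat.le_add_right _ _) hnN))
  have hIW_v : ∀ j, intW j ≤ v := by
    intro j
    rw [hintWdef]
    simp only
    split
    · exact le_trans (le_trans (huu_anti (le_max_right _ _)) huvstar) (hvv_le _)
    · split
      · exact le_trans hc2 (hvv_le _)
      · exact hvv_le _
  have hIW_mono : ∀ j, intW j ≤ intW (j + 1) := by
    intro j
    rw [hintWdef]
    simp only
    by_cases hj : j + 1 ≤ N
    · rw [if_pos (by omega), if_pos hj]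
      exact huu_anti (max_le_max (by omega) le_rfl)
    · by_cases hj2 : j = N
      · subst hj2
        split_ifs <;>
          first
          | omega
          | (rw [Nat.sub_self, max_eq_right (Nat.zero_le _)]; exact hc1)
      · by_cases hj3 : j = N + 1
        · subst hj3
          split_ifs <;>
            first
            | omega
            | (rw [show N + 1 + 1 - (N + 2) = 0 by omega, Nat.add_zero, min_eq_left hnN]
               exact hc2)
        · rw [if_neg (by omega), if_neg hj3, if_neg (by omega), if_neg (by omega)]
          exact hvv_mono (min_le_min (by omega) le_rfl)
  have hIW0 : intW 0 = u := by
    rw [hintWdef]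
    simp only [if_pos (Nat.zero_le N)]
    rw [Nat.sub_zero, max_eq_left hnN, huuN]
  have hIWM : intW (2 * N + 2) = v := by
    rw [hintWdef]
    simp only
    rw [if_neg (by omega), if_neg (by omega), show 2 * N + 2 - (N + 2) = N by omega,
      min_eq_right (by omega), hvvN]
  -- grid map
  set g : ℕ → ℝ := fun k => (k : ℝ) * T / 2 ^ N with hgdef
  have hg_mono : ∀ {a b : ℕ}, a ≤ b → g a ≤ g b := by
    intro a b h
    rw [hgdef]
    simp only
    have h' : (a : ℝ) ≤ (b : ℝ) := Nat.cast_le.2 h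
    gcongr
  have hg0 : ∀ k, 0 ≤ g k := by
    intro k
    rw [hgdef]
    positivity
  have hgT : ∀ k, k ≤ 2 ^ N → g k ≤ T := by
    intro k hk
    rw [hgdef]
    simp only
    rw [div_le_iff₀ (by positivity)]
    have hk' : (k : ℝ) ≤ (2:ℝ) ^ N := by exact_mod_cast hk
    nlinarith
  set w : ℕ → ℝ := fun j => g (intW j) with hwdef
  -- apply the chain estimate
  obtain ⟨hXbd, hAbd⟩ := lem_chain chen (2 * N + 2) w
    (fun j _ => hg_mono (hIW_mono j)) (hg0 _)
    (by rw [hwdef]; simp only; rw [hIWM]; exact hgT v hv)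
  -- structure of each chain step
  have hpow2 : ∀ ℓ : ℕ, ℓ ≤ N → (2:ℕ) ^ N = 2 ^ ℓ * d ℓ := by
    intro ℓ hℓ
    rw [hddef]
    show (2:ℕ) ^ N = 2 ^ ℓ * 2 ^ (N - ℓ)
    rw [← pow_add, Nat.add_sub_cancel' hℓ]
  have hdiff : ∀ (ℓ a b' : ℕ), ℓ ≤ N → d ℓ ∣ a → d ℓ ∣ b' → a < b' → b' ≤ a + d ℓ →
      u ≤ a → b' ≤ v →
      ∃ k, k + 1 ≤ 2 ^ ℓ ∧ u ≤ k * d ℓ ∧ (k + 1) * d ℓ ≤ v ∧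
        a = k * d ℓ ∧ b' = (k + 1) * d ℓ := by
    rintro ℓ a b' hℓ ⟨k, hk⟩ ⟨k2, hk2⟩ hab hba hua hbv
    have hdp := hd ℓ
    have hkk : k < k2 := by
      have : d ℓ * k < d ℓ * k2 := by omega
      exact Nat.lt_of_mul_lt_mul_left this
    have hk2k : k2 = k + 1 := by
      have h2' : d ℓ * k2 ≤ d ℓ * (k + 1) := by
        rw [Nat.mul_succ]
        omega
      have := Nat.le_of_mul_le_mul_left h2' hdp
      omega
    subst hk2k
    have hb'eq : b' = (k + 1) * d ℓ := by rw [hk2]; ring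
    have hk1 : (k + 1) * d ℓ ≤ 2 ^ ℓ * d ℓ := by
      rw [← hb'eq]
      calc b' ≤ v := hbv
        _ ≤ 2 ^ N := hv
        _ = 2 ^ ℓ * d ℓ := hpow2 ℓ hℓ
    exact ⟨k, Nat.le_of_mul_le_mul_right hk1 hdp, by rw [Nat.mul_comm, ← hk]; exact hua,
      by rw [← hb'eq]; exact hbv, by rw [Nat.mul_comm, ← hk], hb'eq⟩
  have hstruct : ∀ j, j < 2 * N + 2 → intW j = intW (j + 1) ∨
      (levfun N nstar j ≤ N ∧ ∃ k, k + 1 ≤ 2 ^ (levfun N nstar j) ∧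
        u ≤ k * d (levfun N nstar j) ∧ (k + 1) * d (levfun N nstar j) ≤ v ∧
        intW j = k * d (levfun N nstar j) ∧ intW (j + 1) = (k + 1) * d (levfun N nstar j)) := by
    intro j hjM
    by_cases hcase : intW j = intW (j + 1)
    · exact Or.inl hcase
    right
    have hlt : intW j < intW (j + 1) := lt_of_le_of_ne (hIW_mono j) hcase
    by_cases hj : j < N
    · -- left gaps
      have hℓ : levfun N nstar j = N - j := by unfold levfun; rw [if_pos hj]
      rw [hℓ]
      have hiw1 : intW j = uu (max (N - j) nstar) := by
        rw [hintWdef]; simp only; rw [if_pos (by omega)]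
      have hiw2 : intW (j + 1) = uu (max (N - (j+1)) nstar) := by
        rw [hintWdef]; simp only; rw [if_pos (by omega)]
      have hns : nstar < N - j := by
        by_contra hcon
        push_neg at hcon
        have e1 : max (N - j) nstar = nstar := max_eq_right hcon
        have e2 : max (N - (j+1)) nstar = nstar := max_eq_right (by omega)
        rw [hiw1, hiw2, e1, e2] at hcase
        exact hcase rfl
      have e1 : max (N - j) nstar = N - j := max_eq_left (by omega)
      have e2 : max (N - (j+1)) nstar = N - (j + 1) := max_eq_left (by omega)
      rw [hiw1, hiw2, e1, e2] at hlt ⊢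
      refine ⟨by omega, ?_⟩
      have hstep := hstepL (N - (j+1)) (by omega)
      rw [show N - (j+1) + 1 = N - j by omega] at hstep
      apply hdiff (N - j) _ _ (by omega) (huu_dvd _)
        (dvd_trans (hdd (by omega : N - (j+1) ≤ N - j)) (huu_dvd _)) hlt hstep (huu_ge _)
      calc uu (N - (j+1)) ≤ uu nstar := huu_anti (by omega)
        _ ≤ vv nstar := huvstar
        _ ≤ v := hvv_le _
    · by_cases hj2 : j = N
      · rw [hj2] at hcase hlt ⊢
        have hℓ : levfun N nstar N = nstar := by
          unfold levfun; rw [if_neg (by omega), if_pos (by omega)]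
        rw [hℓ]
        have hiw1 : intW N = uu nstar := by
          rw [hintWdef]; simp only; rw [if_pos le_rfl, Nat.sub_self,
            max_eq_right (Nat.zero_le _)]
        have hiw2 : intW (N + 1) = c := by
          rw [hintWdef]; simp only
          split_ifs <;> first | omega | rfl
        rw [hiw1, hiw2] at hlt ⊢
        refine ⟨hnN, ?_⟩
        exact hdiff nstar _ _ hnN (huu_dvd _) hcdvd hlt hc3 (huu_ge _)
          (le_trans hc2 (hvv_le _))
      · by_cases hj3 : j = N + 1
        · rw [hj3] at hcase hlt ⊢
          have hℓ : levfun N nstar (N + 1) = nstar := by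
            unfold levfun; rw [if_neg (by omega), if_pos (by omega)]
          rw [hℓ]
          have hiw1 : intW (N + 1) = c := by
            rw [hintWdef]; simp only
            split_ifs <;> first | omega | rfl
          have hiw2 : intW (N + 2) = vv nstar := by
            rw [hintWdef]; simp only
            split_ifs <;>
              first
              | omega
              | (rw [show N + 2 - (N + 2) = 0 by omega, Nat.add_zero, min_eq_left hnN])
          rw [hiw1, hiw2] at hlt ⊢
          refine ⟨hnN, ?_⟩
          exact hdiff nstar _ _ hnN hcdvd (hvv_dvd _) hlt hc4
            (le_trans (huu_ge nstar) hc1) (hvv_le _)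
        · -- right gaps
          have hjN : N + 2 ≤ j := by omega
          have hℓ : levfun N nstar j = nstar + (j - (N + 1)) := by
            unfold levfun; rw [if_neg (by omega), if_neg (by omega)]
          set μ := nstar + (j - (N + 1)) with hμdef
          rw [hℓ]
          have hiw1 : intW j = vv (min (nstar + (j - (N + 2))) N) := by
            rw [hintWdef]; simp only; rw [if_neg (by omega), if_neg (by omega)]
          have hiw2 : intW (j + 1) = vv (min (nstar + (j + 1 - (N + 2))) N) := by
            rw [hintWdef]; simp only; rw [if_neg (by omega), if_neg (by omega)]
          have hμ1 : nstar + (j - (N + 2)) = μ - 1 := by omega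
          have hμ2 : nstar + (j + 1 - (N + 2)) = μ := by omega
          rw [hμ1] at hiw1
          rw [hμ2] at hiw2
          have hμN : μ ≤ N := by
            by_contra hcon
            push_neg at hcon
            have e1 : min (μ - 1) N = N := min_eq_right (by omega)
            have e2 : min μ N = N := min_eq_right (by omega)
            rw [hiw1, hiw2, e1, e2] at hcase
            exact hcase rfl
          have e1 : min (μ - 1) N = μ - 1 := min_eq_left (by omega)
          have e2 : min μ N = μ := min_eq_left hμN
          rw [hiw1, hiw2, e1, e2] at hlt ⊢
          refine ⟨hμN, ?_⟩
          have hstep := hstepR (μ - 1) (by omega)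
          rw [show μ - 1 + 1 = μ by omega] at hstep
          apply hdiff μ _ _ hμN
            (dvd_trans (hdd (by omega : μ - 1 ≤ μ)) (hvv_dvd _)) (hvv_dvd _) hlt hstep
          · calc u ≤ uu nstar := huu_ge _
              _ ≤ vv nstar := huvstar
              _ ≤ vv (μ - 1) := hvv_mono (by omega)
          · exact hvv_le _
  -- exponent facts
  have hγq : 1 < γ / (q - 1) := by
    rw [one_lt_div (by rw [hqdef]; linarith : (0:ℝ) < q - 1)]
    rw [hqdef]
    linarith
  have hγp : 1 < γ / (p - 1) := by
    rw [one_lt_div (by linarith : (0:ℝ) < p - 1)]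
    linarith
  have hwT : ∀ j, w j ≤ T := fun j => hgT _ (le_trans (hIW_v j) hv)
  have hw0 : ∀ j, 0 ≤ w j := fun j => hg0 _
  -- weighted level sums
  set G1 : ℕ → ℝ := fun ν => ((ν : ℕ) : ℝ) ^ γ * ∑ k ∈ fsetD N u v ν,
    |A ((k : ℝ) * T / 2 ^ ν) (((k : ℝ) + 1) * T / 2 ^ ν)| ^ q with hG1def
  set G2 : ℕ → ℝ := fun ν => ((ν : ℕ) : ℝ) ^ γ * ∑ k ∈ fsetD N u v ν,
    ‖X (((k : ℝ) + 1) * T / 2 ^ ν) - X ((k : ℝ) * T / 2 ^ ν)‖ ^ p with hG2def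
  have hG1n : ∀ ν, 0 ≤ G1 ν := by
    intro ν
    rw [hG1def]
    refine mul_nonneg (Real.rpow_nonneg (Nat.cast_nonneg _) _) ?_
    exact Finset.sum_nonneg fun k _ => Real.rpow_nonneg (abs_nonneg _) _
  have hG2n : ∀ ν, 0 ≤ G2 ν := by
    intro ν
    rw [hG2def]
    refine mul_nonneg (Real.rpow_nonneg (Nat.cast_nonneg _) _) ?_
    exact Finset.sum_nonneg fun k _ => Real.rpow_nonneg (norm_nonneg _) _
  -- per-step bounds
  have hb1 : ∀ j ∈ range (2 * N + 2),
      ((levfun N nstar j : ℝ)) ^ γ * |A (w j) (w (j + 1))| ^ q ≤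
        (if levfun N nstar j ≤ N then G1 (levfun N nstar j) else 0) := by
    intro j hj
    rw [mem_range] at hj
    rcases hstruct j hj with heq | ⟨hℓN, k, hk1, hk2, hk3, he1, he2⟩
    · have hww : w (j + 1) = w j := by rw [hwdef]; simp only; rw [heq]
      rw [hww, lem_Ass chen (hw0 j) (hwT j), abs_zero, Real.zero_rpow (ne_of_gt hq0), mul_zero]
      split
      · exact hG1n _
      · exact le_rfl
    · rw [if_pos hℓN]
      have e1 : w j = (k : ℝ) * T / 2 ^ (levfun N nstar j) := by
        rw [hwdef]
        simp only
        rw [he1]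
        simp only [hddef, hgdef]
        exact lem_grid T k hℓN
      have e2 : w (j + 1) = ((k : ℝ) + 1) * T / 2 ^ (levfun N nstar j) := by
        rw [hwdef]
        simp only
        rw [he2]
        simp only [hddef, hgdef]
        rw [lem_grid T (k + 1) hℓN]
        push_cast
        ring
      rw [e1, e2]
      have hkmem : k ∈ fsetD N u v (levfun N nstar j) := by
        unfold fsetD
        rw [mem_filter, mem_range]
        simp only [hddef] at hk2 hk3
        exact ⟨by omega, hk2, hk3⟩
      have hsingle := Finset.single_le_sum (s := fsetD N u v (levfun N nstar j))
        (f := fun i : ℕ => |A ((i : ℝ) * T / 2 ^ (levfun N nstar j))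
          (((i : ℝ) + 1) * T / 2 ^ (levfun N nstar j))| ^ q)
        (fun i _ => Real.rpow_nonneg (abs_nonneg _) _) hkmem
      rw [hG1def]
      exact mul_le_mul_of_nonneg_left hsingle (Real.rpow_nonneg (Nat.cast_nonneg _) _)
  have hb2 : ∀ j ∈ range (2 * N + 2),
      ((levfun N nstar j : ℝ)) ^ γ * ‖X (w (j + 1)) - X (w j)‖ ^ p ≤
        (if levfun N nstar j ≤ N then G2 (levfun N nstar j) else 0) := by
    intro j hj
    rw [mem_range] at hj
    rcases hstruct j hj with heq | ⟨hℓN, k, hk1, hk2, hk3, he1, he2⟩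
    · have hww : w (j + 1) = w j := by rw [hwdef]; simp only; rw [heq]
      rw [hww, sub_self, norm_zero, Real.zero_rpow (by linarith : p ≠ 0), mul_zero]
      split
      · exact hG2n _
      · exact le_rfl
    · rw [if_pos hℓN]
      have e1 : w j = (k : ℝ) * T / 2 ^ (levfun N nstar j) := by
        rw [hwdef]
        simp only
        rw [he1]
        simp only [hddef, hgdef]
        exact lem_grid T k hℓN
      have e2 : w (j + 1) = ((k : ℝ) + 1) * T / 2 ^ (levfun N nstar j) := by
        rw [hwdef]
        simp only
        rw [he2]
        simp only [hddef, hgdef]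
        rw [lem_grid T (k + 1) hℓN]
        push_cast
        ring
      rw [e1, e2]
      have hkmem : k ∈ fsetD N u v (levfun N nstar j) := by
        unfold fsetD
        rw [mem_filter, mem_range]
        simp only [hddef] at hk2 hk3
        exact ⟨by omega, hk2, hk3⟩
      have hsingle := Finset.single_le_sum (s := fsetD N u v (levfun N nstar j))
        (f := fun i : ℕ => ‖X (((i : ℝ) + 1) * T / 2 ^ (levfun N nstar j)) -
          X ((i : ℝ) * T / 2 ^ (levfun N nstar j))‖ ^ p)
        (fun i _ => Real.rpow_nonneg (norm_nonneg _) _) hkmem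
      rw [hG2def]
      exact mul_le_mul_of_nonneg_left hsingle (Real.rpow_nonneg (Nat.cast_nonneg _) _)
  -- assemble both level sums
  have HA := lem_assemble q γ hq hγq N nstar h1 hnN
    (fun j => |A (w j) (w (j + 1))|) G1 (fun j => abs_nonneg _) hG1n hb1
  have HX := lem_assemble p γ (by linarith) hγp N nstar h1 hnN
    (fun j => ‖X (w (j + 1)) - X (w j)‖) G2 (fun j => norm_nonneg _) hG2n hb2
  -- final combination
  have e0 : (u : ℝ) * T / 2 ^ N = w 0 := by
    rw [hwdef]; simp only; rw [hIW0]
  have eM : (v : ℝ) * T / 2 ^ N = w (2 * N + 2) := by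
    rw [hwdef]; simp only; rw [hIWM]
  rw [e0, eM]
  set SA := ∑ j ∈ range (2 * N + 2), |A (w j) (w (j + 1))| with hSAdef
  set SX := ∑ j ∈ range (2 * N + 2), ‖X (w (j + 1)) - X (w j)‖ with hSXdef
  have hSA0 : 0 ≤ SA := Finset.sum_nonneg fun j _ => abs_nonneg _
  have hSX0 : 0 ≤ SX := Finset.sum_nonneg fun j _ => norm_nonneg _
  have hstep1 : |A (w 0) (w (2 * N + 2))| ^ q ≤ (SA + 1 / 2 * SX ^ 2) ^ q :=
    Real.rpow_le_rpow (abs_nonneg _) hAbd (le_of_lt hq0)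
  have hstep2 : (SA + 1 / 2 * SX ^ 2) ^ q ≤ 2 ^ (q - 1) * (SA ^ q + (1 / 2 * SX ^ 2) ^ q) :=
    lem_two_split hSA0 (by positivity) (le_of_lt hq)
  have hstep3 : (1 / 2 * SX ^ 2 : ℝ) ^ q = (1 / 2 : ℝ) ^ q * SX ^ p := by
    rw [Real.mul_rpow (by norm_num) (by positivity)]
    congr 1
    rw [← Real.rpow_natCast SX 2, ← Real.rpow_mul hSX0]
    congr 1
    rw [hqdef]
    push_cast
    ring
  have hc2pos : (0:ℝ) ≤ (2:ℝ) ^ (q - 1) := Real.rpow_nonneg (by norm_num) _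
  have hchalf : (0:ℝ) ≤ (1/2:ℝ) ^ q := Real.rpow_nonneg (by norm_num) _
  calc |A (w 0) (w (2 * N + 2))| ^ q
      ≤ 2 ^ (q - 1) * (SA ^ q + (1 / 2) ^ q * SX ^ p) := by
        rw [← hstep3]
        exact le_trans hstep1 hstep2
    _ ≤ 2 ^ (q - 1) * (((2 * Zc (γ / (q - 1)) + 2) ^ (q - 1) * 4 * ∑ n ∈ range N, G1 (n + 1))
          + (1 / 2) ^ q * ((2 * Zc (γ / (p - 1)) + 2) ^ (p - 1) * 4 * ∑ n ∈ range N, G2 (n + 1))) := by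
        gcongr <;> first | exact HA | exact HX
    _ = _ := by
        rw [hG1def, hG2def]
        ring
end KEY


/-- deterministic core of the finite `(p/2)`-variation of the Lévy area.
For `p > 2` and `γ > p − 1` there are constants `C₁, C₂` depending only on `p` and `γ`
such that: whenever `X : [0,T] → ℝ²` and `A` satisfies the Chen relation, and the
weighted dyadic sums `K₁ = Σ_{n≥1} n^γ Σ_{k<2^n} |A(k2^{−n}T,(k+1)2^{−n}T)|^{p/2}`
and `K₂ = Σ_{n≥1} n^γ Σ_{k<2^n} ‖X((k+1)2^{−n}T) − X(k2^{−n}T)‖^p` are finite, then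
along every finite partition of `[0,T]` consisting of dyadic multiples of `T` one has
`Σ_i |A(t_{i−1}, t_i)|^{p/2} ≤ C₁K₁ + C₂K₂`. -/
theorem stmt_14 (p γ : ℝ) (hp : 2 < p) (hγ : p - 1 < γ) :
    ∃ C₁ C₂ : ℝ, ∀ (T : ℝ), 0 < T →
      ∀ (X : ℝ → EuclideanSpace ℝ (Fin 2)) (A : ℝ → ℝ → ℝ),
      (∀ s t u : ℝ, 0 ≤ s → s ≤ t → t ≤ u → u ≤ T →
        A s u = A s t + A t u +
          (1 / 2) * ((X t 0 - X s 0) * (X u 1 - X t 1)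
            - (X t 1 - X s 1) * (X u 0 - X t 0))) →
      Summable (fun n : ℕ => ((n : ℝ) + 1) ^ γ *
        ∑ k ∈ Finset.range (2 ^ (n + 1)),
          |A ((k : ℝ) * T / 2 ^ (n + 1)) (((k : ℝ) + 1) * T / 2 ^ (n + 1))| ^ (p / 2)) →
      Summable (fun n : ℕ => ((n : ℝ) + 1) ^ γ *
        ∑ k ∈ Finset.range (2 ^ (n + 1)),
          ‖X (((k : ℝ) + 1) * T / 2 ^ (n + 1)) - X ((k : ℝ) * T / 2 ^ (n + 1))‖ ^ p) →
      ∀ (m : ℕ) (t : Fin (m + 1) → ℝ), Monotone t → t 0 = 0 → t (Fin.last m) = T →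
      (∀ i, ∃ k n : ℕ, t i = (k : ℝ) * T / 2 ^ n) →
      ∑ i : Fin m, |A (t i.castSucc) (t i.succ)| ^ (p / 2) ≤
        C₁ * (∑' n : ℕ, ((n : ℝ) + 1) ^ γ *
          ∑ k ∈ Finset.range (2 ^ (n + 1)),
            |A ((k : ℝ) * T / 2 ^ (n + 1)) (((k : ℝ) + 1) * T / 2 ^ (n + 1))| ^ (p / 2))
        + C₂ * (∑' n : ℕ, ((n : ℝ) + 1) ^ γ *
          ∑ k ∈ Finset.range (2 ^ (n + 1)),
            ‖X (((k : ℝ) + 1) * T / 2 ^ (n + 1)) - X ((k : ℝ) * T / 2 ^ (n + 1))‖ ^ p) := by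
  classical
  refine ⟨(2:ℝ) ^ (p/2 - 1) * ((2 * Zc (γ / (p/2 - 1)) + 2) ^ (p/2 - 1) * 4),
    (2:ℝ) ^ (p/2 - 1) * (1/2 : ℝ) ^ (p/2) * ((2 * Zc (γ / (p - 1)) + 2) ^ (p - 1) * 4), ?_⟩
  intro T hT X A chen hK1 hK2 m t hmono ht0 htlast hdyadic
  set D₁ : ℝ := (2:ℝ) ^ (p/2 - 1) * ((2 * Zc (γ / (p/2 - 1)) + 2) ^ (p/2 - 1) * 4) with hD1def
  set D₂ : ℝ := (2:ℝ) ^ (p/2 - 1) * (1/2 : ℝ) ^ (p/2) * ((2 * Zc (γ / (p - 1)) + 2) ^ (p - 1) * 4)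
    with hD2def
  have hZ1 : (0:ℝ) ≤ 2 * Zc (γ / (p/2 - 1)) + 2 := by linarith [Zc_nonneg (γ / (p/2 - 1))]
  have hZ2 : (0:ℝ) ≤ 2 * Zc (γ / (p - 1)) + 2 := by linarith [Zc_nonneg (γ / (p - 1))]
  have hD1n : 0 ≤ D₁ := by
    rw [hD1def]
    have := Real.rpow_nonneg (show (0:ℝ) ≤ 2 by norm_num) (p/2 - 1)
    have := Real.rpow_nonneg hZ1 (p/2 - 1)
    positivity
  have hD2n : 0 ≤ D₂ := by
    rw [hD2def]
    have := Real.rpow_nonneg (show (0:ℝ) ≤ 2 by norm_num) (p/2 - 1)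
    have := Real.rpow_nonneg hZ2 (p - 1)
    have := Real.rpow_nonneg (show (0:ℝ) ≤ 1/2 by norm_num) (p/2)
    positivity
  -- common dyadic level
  choose kf nf hkn using hdyadic
  set N := (Finset.univ.sup nf) + 1 with hNdef
  have hnf : ∀ i, nf i ≤ N := fun i =>
    le_trans (Finset.le_sup (Finset.mem_univ i)) (Nat.le_succ _)
  set K : Fin (m + 1) → ℕ := fun i => kf i * 2 ^ (N - nf i) with hKdef
  have htK : ∀ i, t i = (K i : ℝ) * T / 2 ^ N := by
    intro i
    rw [hkn i, hKdef]
    exact (lem_grid T (kf i) (hnf i)).symm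
  have hKmono : ∀ {i j}, i ≤ j → K i ≤ K j := by
    intro i j hij
    have h := hmono hij
    rw [htK i, htK j, mul_div_assoc, mul_div_assoc] at h
    have h2 : (0:ℝ) < T / 2 ^ N := by positivity
    exact_mod_cast (mul_le_mul_iff_of_pos_right h2).1 h
  have hKlast : K (Fin.last m) = 2 ^ N := by
    have h := htK (Fin.last m)
    rw [htlast] at h
    have h2 : (0:ℝ) < T / 2 ^ N := by positivity
    have h5 : (K (Fin.last m) : ℝ) * (T / 2 ^ N) = (2:ℝ) ^ N * (T / 2 ^ N) := by
      rw [← mul_div_assoc, ← h]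
      field_simp
    have h4 : (K (Fin.last m) : ℝ) = (2:ℝ) ^ N := mul_right_cancel₀ (ne_of_gt h2) h5
    exact_mod_cast h4
  have hKub : ∀ i, K i ≤ 2 ^ N := by
    intro i
    rw [← hKlast]
    exact hKmono (Fin.le_last i)
  -- per-interval estimate
  set F1 : Fin m → ℝ := fun i => ∑ n ∈ range N, ((n + 1 : ℕ) : ℝ) ^ γ *
    ∑ k ∈ fsetD N (K i.castSucc) (K i.succ) (n+1),
      |A ((k : ℝ) * T / 2 ^ (n+1)) (((k : ℝ) + 1) * T / 2 ^ (n+1))| ^ (p / 2) with hF1def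
  set F2 : Fin m → ℝ := fun i => ∑ n ∈ range N, ((n + 1 : ℕ) : ℝ) ^ γ *
    ∑ k ∈ fsetD N (K i.castSucc) (K i.succ) (n+1),
      ‖X (((k : ℝ) + 1) * T / 2 ^ (n+1)) - X ((k : ℝ) * T / 2 ^ (n+1))‖ ^ p with hF2def
  have hF1n : ∀ i, 0 ≤ F1 i := by
    intro i
    rw [hF1def]
    refine Finset.sum_nonneg fun n _ => mul_nonneg (Real.rpow_nonneg (Nat.cast_nonneg _) _) ?_
    exact Finset.sum_nonneg fun k _ => Real.rpow_nonneg (abs_nonneg _) _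
  have hF2n : ∀ i, 0 ≤ F2 i := by
    intro i
    rw [hF2def]
    refine Finset.sum_nonneg fun n _ => mul_nonneg (Real.rpow_nonneg (Nat.cast_nonneg _) _) ?_
    exact Finset.sum_nonneg fun k _ => Real.rpow_nonneg (norm_nonneg _) _
  have hper : ∀ i : Fin m, |A (t i.castSucc) (t i.succ)| ^ (p / 2) ≤ D₁ * F1 i + D₂ * F2 i := by
    intro i
    rw [htK i.castSucc, htK i.succ]
    rcases eq_or_lt_of_le (hKmono (Fin.castSucc_le_succ i)) with he | hlt
    · rw [← he]
      have hs0 : (0:ℝ) ≤ (K i.castSucc : ℝ) * T / 2 ^ N := by positivity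
      have hsT : (K i.castSucc : ℝ) * T / 2 ^ N ≤ T := by
        rw [div_le_iff₀ (by positivity)]
        have : (K i.castSucc : ℝ) ≤ (2:ℝ) ^ N := by exact_mod_cast hKub i.castSucc
        nlinarith
      rw [lem_Ass chen hs0 hsT, abs_zero, Real.zero_rpow (by positivity : p / 2 ≠ 0)]
      exact add_nonneg (mul_nonneg hD1n (hF1n i)) (mul_nonneg hD2n (hF2n i))
    · exact lem_key hT hp hγ chen N (K i.castSucc) (K i.succ) (by omega) hlt (hKub i.succ)
  -- summing over the partition
  have hsum1 : ∑ i : Fin m, F1 i ≤ ∑' n : ℕ, ((n : ℝ) + 1) ^ γ *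
      ∑ k ∈ Finset.range (2 ^ (n + 1)),
        |A ((k : ℝ) * T / 2 ^ (n + 1)) (((k : ℝ) + 1) * T / 2 ^ (n + 1))| ^ (p / 2) := by
    rw [hF1def, Finset.sum_comm]
    have hterm : ∀ n ∈ range N, (∑ i : Fin m, ((n + 1 : ℕ) : ℝ) ^ γ *
        ∑ k ∈ fsetD N (K i.castSucc) (K i.succ) (n+1),
          |A ((k : ℝ) * T / 2 ^ (n+1)) (((k : ℝ) + 1) * T / 2 ^ (n+1))| ^ (p / 2)) ≤
        ((n : ℝ) + 1) ^ γ * ∑ k ∈ Finset.range (2 ^ (n + 1)),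
          |A ((k : ℝ) * T / 2 ^ (n + 1)) (((k : ℝ) + 1) * T / 2 ^ (n + 1))| ^ (p / 2) := by
      intro n _
      rw [← Finset.mul_sum]
      have hcast : ((n + 1 : ℕ) : ℝ) = (n : ℝ) + 1 := by push_cast; ring
      rw [hcast]
      refine mul_le_mul_of_nonneg_left ?_ (Real.rpow_nonneg (by positivity) _)
      -- disjointness argument
      have hdisj : ((Finset.univ : Finset (Fin m)) : Set (Fin m)).PairwiseDisjoint
          (fun i => fsetD N (K i.castSucc) (K i.succ) (n+1)) := by
        intro i _ j _ hij
        simp only [Function.onFun]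
        rw [Finset.disjoint_left]
        intro k hk1 hk2
        unfold fsetD at hk1 hk2
        rw [Finset.mem_filter] at hk1 hk2
        have hdp : 0 < 2 ^ (N - (n+1)) := pow_pos (by norm_num) _
        have hkk : k * 2 ^ (N - (n+1)) < (k+1) * 2 ^ (N - (n+1)) :=
          (Nat.mul_lt_mul_right hdp).2 (Nat.lt_succ_self k)
        rcases lt_or_gt_of_ne hij with hlt | hlt
        · have : i.succ ≤ j.castSucc := by
            rw [Fin.le_def]
            simp only [Fin.val_succ, Fin.coe_castSucc]
            exact hlt
          have := hKmono this
          omega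
        · have : j.succ ≤ i.castSucc := by
            rw [Fin.le_def]
            simp only [Fin.val_succ, Fin.coe_castSucc]
            exact hlt
          have := hKmono this
          omega
      rw [← Finset.sum_biUnion hdisj]
      apply Finset.sum_le_sum_of_subset_of_nonneg
      · intro k hk
        rw [Finset.mem_biUnion] at hk
        obtain ⟨i, _, hk⟩ := hk
        unfold fsetD at hk
        rw [Finset.mem_filter] at hk
        exact hk.1
      · intro k _ _
        exact Real.rpow_nonneg (abs_nonneg _) _
    refine le_trans (Finset.sum_le_sum hterm) ?_
    apply Summable.sum_le_tsum (range N) _ hK1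
    intro n _
    refine mul_nonneg (Real.rpow_nonneg (by positivity) _) ?_
    exact Finset.sum_nonneg fun k _ => Real.rpow_nonneg (abs_nonneg _) _
  have hsum2 : ∑ i : Fin m, F2 i ≤ ∑' n : ℕ, ((n : ℝ) + 1) ^ γ *
      ∑ k ∈ Finset.range (2 ^ (n + 1)),
        ‖X (((k : ℝ) + 1) * T / 2 ^ (n + 1)) - X ((k : ℝ) * T / 2 ^ (n + 1))‖ ^ p := by
    rw [hF2def, Finset.sum_comm]
    have hterm : ∀ n ∈ range N, (∑ i : Fin m, ((n + 1 : ℕ) : ℝ) ^ γ *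
        ∑ k ∈ fsetD N (K i.castSucc) (K i.succ) (n+1),
          ‖X (((k : ℝ) + 1) * T / 2 ^ (n+1)) - X ((k : ℝ) * T / 2 ^ (n+1))‖ ^ p) ≤
        ((n : ℝ) + 1) ^ γ * ∑ k ∈ Finset.range (2 ^ (n + 1)),
          ‖X (((k : ℝ) + 1) * T / 2 ^ (n + 1)) - X ((k : ℝ) * T / 2 ^ (n + 1))‖ ^ p := by
      intro n _
      rw [← Finset.mul_sum]
      have hcast : ((n + 1 : ℕ) : ℝ) = (n : ℝ) + 1 := by push_cast; ring
      rw [hcast]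
      refine mul_le_mul_of_nonneg_left ?_ (Real.rpow_nonneg (by positivity) _)
      have hdisj : ((Finset.univ : Finset (Fin m)) : Set (Fin m)).PairwiseDisjoint
          (fun i => fsetD N (K i.castSucc) (K i.succ) (n+1)) := by
        intro i _ j _ hij
        simp only [Function.onFun]
        rw [Finset.disjoint_left]
        intro k hk1 hk2
        unfold fsetD at hk1 hk2
        rw [Finset.mem_filter] at hk1 hk2
        have hdp : 0 < 2 ^ (N - (n+1)) := pow_pos (by norm_num) _
        have hkk : k * 2 ^ (N - (n+1)) < (k+1) * 2 ^ (N - (n+1)) :=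
          (Nat.mul_lt_mul_right hdp).2 (Nat.lt_succ_self k)
        rcases lt_or_gt_of_ne hij with hlt | hlt
        · have : i.succ ≤ j.castSucc := by
            rw [Fin.le_def]
            simp only [Fin.val_succ, Fin.coe_castSucc]
            exact hlt
          have := hKmono this
          omega
        · have : j.succ ≤ i.castSucc := by
            rw [Fin.le_def]
            simp only [Fin.val_succ, Fin.coe_castSucc]
            exact hlt
          have := hKmono this
          omega
      rw [← Finset.sum_biUnion hdisj]
      apply Finset.sum_le_sum_of_subset_of_nonneg
      · intro k hk
        rw [Finset.mem_biUnion] at hk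
        obtain ⟨i, _, hk⟩ := hk
        unfold fsetD at hk
        rw [Finset.mem_filter] at hk
        exact hk.1
      · intro k _ _
        exact Real.rpow_nonneg (norm_nonneg _) _
    refine le_trans (Finset.sum_le_sum hterm) ?_
    apply Summable.sum_le_tsum (range N) _ hK2
    intro n _
    refine mul_nonneg (Real.rpow_nonneg (by positivity) _) ?_
    exact Finset.sum_nonneg fun k _ => Real.rpow_nonneg (norm_nonneg _) _
  calc ∑ i : Fin m, |A (t i.castSucc) (t i.succ)| ^ (p / 2)
      ≤ ∑ i : Fin m, (D₁ * F1 i + D₂ * F2 i) := Finset.sum_le_sum fun i _ => hper i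
    _ = D₁ * ∑ i : Fin m, F1 i + D₂ * ∑ i : Fin m, F2 i := by
        rw [Finset.sum_add_distrib, ← Finset.mul_sum, ← Finset.mul_sum]
    _ ≤ _ := by
        gcongr <;>
          first
          | exact hsum1
          | exact hsum2
          | exact Finset.sum_nonneg fun i _ => hF1n i
          | exact Finset.sum_nonneg fun i _ => hF2n i
end
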